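/- Assume Hypothesis (HA) and let k ≥ 1 be a natural number such that σ_per(P) = {λ e^{2πi j/k} : j = 0, 1, …, k−1}. Then g does not lie in the range of P^{k+1} − λ^{k+1} acting on C(M;ℂ); consequently, for every m ≥ 1, ker((P^{k+1} − λ^{k+1})^m) = ker(P^{k+1} − λ^{k+1}) = span_ℂ{g} in C(M;ℂ), i.e. the eigenvalue λ^{k+1} of P^{k+1} is semisimple with one-dimensional generalized eigenspace. -/

import Mathlib

open MeasureTheory ProbabilityTheory Filter Topology

namespace QEM

noncomputable section

variable {M : Type*} [MetricSpace M] [CompactSpace M] [MeasurableSpace M] [BorelSpace M]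

/-- The weighted Koopman operator on real-valued functions:
`P f (x) = e^{φ(x)} ∫ f(y) κ(x,dy)`. -/
def PR (φ : M → ℝ) (κ : Kernel M M) (f : M → ℝ) : M → ℝ :=
  fun x => Real.exp (φ x) * ∫ y, f y ∂(κ x)

/-- The weighted Koopman operator on complex-valued functions
(`P f := P(Re f) + i P(Im f)`, equivalently with the complex Bochner integral). -/
def PC (φ : M → ℝ) (κ : Kernel M M) (f : M → ℂ) : M → ℂ :=
  fun x => (Real.exp (φ x) : ℂ) * ∫ y, f y ∂(κ x)

/-- Bounded measurable real-valued functions. -/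
def BddMeas (f : M → ℝ) : Prop := Measurable f ∧ ∃ C : ℝ, ∀ x, |f x| ≤ C

/-- Bounded measurable complex-valued functions. -/
def BddMeasC (f : M → ℂ) : Prop := Measurable f ∧ ∃ C : ℝ, ∀ x, ‖f x‖ ≤ C

/-- The operator `P_g f := P (1_{g>0} · f)`. -/
def Pg (φ : M → ℝ) (κ : Kernel M M) (g : M → ℝ) : (M → ℝ) → (M → ℝ) :=
  fun f => PR φ κ (Set.indicator {x | 0 < g x} f)

/-- Complex version of `P_g`. -/
def PgC (φ : M → ℝ) (κ : Kernel M M) (g : M → ℝ) : (M → ℂ) → (M → ℂ) :=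
  fun f => PC φ κ (Set.indicator {x | 0 < g x} f)

/-- The indicator function of `{g > 0}`. -/
def oneG (g : M → ℝ) : M → ℝ := Set.indicator {x | 0 < g x} (fun _ => (1 : ℝ))

/-- The normalized restriction `μ̃` of `μ` to `{g > 0}`, i.e.
`μ̃(A) = μ(A ∩ {g>0}) / μ({g>0})`. -/
def mtilde (μ : Measure M) (g : M → ℝ) : Measure M :=
  (μ {x | 0 < g x})⁻¹ • μ.restrict {x | 0 < g x}

/-- The root-of-unity phase `e^{2πi j/k}`. -/
def rootU (k j : ℕ) : ℂ := Complex.exp (2 * (Real.pi : ℂ) * Complex.I * (j : ℂ) / (k : ℂ))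

/-- Basic standing setup: `μ` is a fully supported Borel probability measure, `κ` a
sub-Markov kernel with `κ(x,·) ≪ μ` for all `x`, and `φ` a (bounded) continuous function. -/
structure Setup (μ : Measure M) (κ : Kernel M M) (φ : M → ℝ) : Prop where
  prob : IsProbabilityMeasure μ
  fullSupp : ∀ U : Set M, IsOpen U → U.Nonempty → 0 < μ U
  subMarkov : ∀ x, κ x Set.univ ≤ 1
  ac : ∀ x, κ x ≪ μ
  contφ : Continuous φ

/-- Hypothesis (HA): (i) `P` is strong Feller; (ii) `lam > 0` equals the spectral radius of the
induced operator `T` on `L^∞(M,μ;ℂ)` (where `T` agrees a.e. with the pointwise operator `P` on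
bounded measurable representatives); (iii) the eigenspace of `P` at `lam` in `L^∞(M,μ)` is
one-dimensional, spanned by a continuous nonnegative `g ≢ 0` with `P g = lam·g` and
`∫ g dμ = μ {g>0}`; (iv) `P^*μ = lam·μ`. -/
structure HypHA (μ : Measure M) (κ : Kernel M M) (φ : M → ℝ)
    (T : Lp ℂ ⊤ μ →L[ℂ] Lp ℂ ⊤ μ) (lam : ℝ) (g : M → ℝ) : Prop where
  setup : Setup μ κ φ
  strongFeller : ∀ f : M → ℝ, BddMeas f → Continuous (PR φ κ f)
  lam_pos : 0 < lam
  Tcompat : ∀ f : M → ℂ, BddMeasC f → ∀ F : Lp ℂ ⊤ μ, ⇑F =ᵐ[μ] f →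
      ⇑(T F) =ᵐ[μ] PC φ κ f
  specRad : spectralRadius ℂ T = ENNReal.ofReal lam
  g_cont : Continuous g
  g_nonneg : ∀ x, 0 ≤ g x
  g_ne : g ≠ 0
  g_eigen : PR φ κ g = fun x => lam * g x
  g_int : ∫ x, g x ∂μ = (μ {x | 0 < g x}).toReal
  eigen_dim : ∀ f : M → ℝ, BddMeas f → PR φ κ f =ᵐ[μ] (fun x => lam * f x) →
      ∃ c : ℝ, f =ᵐ[μ] fun x => c * g x
  Pstar : ∀ f : M → ℝ, BddMeas f → ∫ x, PR φ κ f x ∂μ = lam * ∫ x, f x ∂μ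

/-- Membership in the point peripheral spectrum `σ_per(P)`:
`|α| = lam` and `P f = α f` for some nonzero `f ∈ L^∞(M,μ;ℂ)`. -/
def PerSpec (μ : Measure M) (κ : Kernel M M) (φ : M → ℝ) (lam : ℝ) (α : ℂ) : Prop :=
  ‖α‖ = lam ∧ ∃ f : M → ℂ, BddMeasC f ∧ ¬ (f =ᵐ[μ] 0) ∧ PC φ κ f =ᵐ[μ] fun x => α * f x

/-- `σ_per(P) = {lam·e^{2πi j/k} : j = 0, …, k-1}`. -/
def PerSpecEq (μ : Measure M) (κ : Kernel M M) (φ : M → ℝ) (lam : ℝ) (k : ℕ) : Prop :=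
  ∀ α : ℂ, PerSpec μ κ φ lam α ↔ ∃ j : ℕ, j < k ∧ α = (lam : ℂ) * rootU k j

/-- A family of `k` linearly independent, nonnegative, continuous functions with pairwise
disjoint supports, spanning `ker(P^k - lam^k)` in `L^∞(M,μ;ℂ)`, each of integral `μ {g>0}`. -/
structure PreFamily (μ : Measure M) (κ : Kernel M M) (φ : M → ℝ) (lam : ℝ) (g : M → ℝ)
    (k : ℕ) (gi : Fin k → M → ℝ) : Prop where
  cont : ∀ i, Continuous (gi i)
  nonneg : ∀ i x, 0 ≤ gi i x
  indep : LinearIndependent ℝ gi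
  span_ker : ∀ f : M → ℂ, BddMeasC f →
      (((PC φ κ)^[k] f) =ᵐ[μ] fun x => (lam : ℂ) ^ k * f x) ↔
        ∃ c : Fin k → ℂ, f =ᵐ[μ] fun x => ∑ i, c i * (gi i x : ℂ)
  integral : ∀ i, ∫ x, gi i x ∂μ = (μ {x | 0 < g x}).toReal
  disj : ∀ i j, i ≠ j → ∀ x, ¬ (0 < gi i x ∧ 0 < gi j x)

/-- The cyclic family hypothesis: nonnegative continuous `g_0, …, g_{k-1}` supported in `{g>0}`
with pairwise disjoint supports, spanning `ker(P^k - lam^k)` in `L^∞(M,μ;ℂ)`, with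
`∫ g_i dμ = μ {g>0}`, `P g_i = lam·g_{i-1 (mod k)}` and `g = (1/k) ∑ g_i`. -/
structure CyclicFamily (μ : Measure M) (κ : Kernel M M) (φ : M → ℝ) (lam : ℝ) (g : M → ℝ)
    (k : ℕ) [NeZero k] (gi : Fin k → M → ℝ) : Prop where
  cont : ∀ i, Continuous (gi i)
  nonneg : ∀ i x, 0 ≤ gi i x
  supported : ∀ i x, 0 < gi i x → 0 < g x
  disj : ∀ i j, i ≠ j → ∀ x, ¬ (0 < gi i x ∧ 0 < gi j x)
  span_ker : ∀ f : M → ℂ, BddMeasC f →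
      (((PC φ κ)^[k] f) =ᵐ[μ] fun x => (lam : ℂ) ^ k * f x) ↔
        ∃ c : Fin k → ℂ, f =ᵐ[μ] fun x => ∑ i, c i * (gi i x : ℂ)
  integral : ∀ i, ∫ x, gi i x ∂μ = (μ {x | 0 < g x}).toReal
  cycle : ∀ i : Fin k, PR φ κ (gi i) = fun x => lam * gi (i - 1) x
  avg : g = fun x => (1 / (k : ℝ)) * ∑ i, gi i x

/-- The spectral decomposition hypothesis: a closed `P_g`-invariant subspace `V` of
`L^∞({g>0},μ;ℂ)` with `L^∞({g>0},μ;ℂ) = span{g_0,…,g_{k-1}} ⊕ V` and such that the spectral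
radius of `P_g` restricted to `V` is `< lam` (expressed through a geometric bound on the
iterates, via Gelfand's formula). -/
structure SpecDecomp (μ : Measure M) (κ : Kernel M M) (φ : M → ℝ) (lam : ℝ) (g : M → ℝ)
    (k : ℕ) (gi : Fin k → M → ℝ) (V : Submodule ℂ (M → ℂ)) : Prop where
  meas : ∀ v ∈ V, Measurable v
  bdd : ∀ v ∈ V, ∃ C : ℝ, ∀ x, ‖v x‖ ≤ C
  supp : ∀ v ∈ V, ∀ x, ¬ 0 < g x → v x = 0
  invariant : ∀ v ∈ V, PgC φ κ g v ∈ V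
  closed : ∀ (u : ℕ → M → ℂ) (f : M → ℂ), (∀ n, u n ∈ V) → Measurable f →
      (∃ C : ℝ, ∀ x, ‖f x‖ ≤ C) → (∀ x, ¬ 0 < g x → f x = 0) →
      Tendsto (fun n => eLpNorm (u n - f) ⊤ μ) atTop (nhds 0) → f ∈ V
  decomp : ∀ f : M → ℂ, BddMeasC f → (∀ x, ¬ 0 < g x → f x = 0) →
      ∃ c : Fin k → ℂ, ∃ v ∈ V, f = fun x => (∑ i, c i * (gi i x : ℂ)) + v x
  unique : ∀ c : Fin k → ℂ, (fun x => ∑ i, c i * (gi i x : ℂ)) ∈ V → c = 0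
  gap : ∃ r : ℝ, 0 ≤ r ∧ r < lam ∧ ∃ C : ℝ, ∀ n : ℕ, ∀ v ∈ V,
      eLpNorm ((PgC φ κ g)^[n] v) ⊤ μ ≤ ENNReal.ofReal (C * r ^ n) * eLpNorm v ⊤ μ

/-- The operator `P^{k+1} - lam^{k+1}` on complex-valued functions. -/
def Qop (φ : M → ℝ) (κ : Kernel M M) (lam : ℝ) (k : ℕ) : (M → ℂ) → (M → ℂ) :=
  fun h x => (PC φ κ)^[k + 1] h x - (lam : ℂ) ^ (k + 1) * h x


section Statement16Aux

variable {μ : Measure M} {κ : Kernel M M} {φ : M → ℝ}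

lemma Setup.finiteKernel (hS : Setup μ κ φ) : IsFiniteKernel κ :=
  ⟨⟨1, ENNReal.one_lt_top, fun x => hS.subMarkov x⟩⟩

lemma Setup.finiteMeasure (hS : Setup μ κ φ) (x : M) : IsFiniteMeasure (κ x) :=
  ⟨lt_of_le_of_lt (hS.subMarkov x) ENNReal.one_lt_top⟩

lemma BddMeasC.integrable_kernel (hS : Setup μ κ φ) {f : M → ℂ} (hf : BddMeasC f) (x : M) :
    Integrable f (κ x) := by
  haveI := hS.finiteMeasure x
  obtain ⟨hm, C, hC⟩ := hf
  exact (integrable_const C).mono' hm.aestronglyMeasurable (Filter.Eventually.of_forall hC)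

lemma BddMeasC.integrable_mu (hS : Setup μ κ φ) {f : M → ℂ} (hf : BddMeasC f) :
    Integrable f μ := by
  haveI := hS.prob
  obtain ⟨hm, C, hC⟩ := hf
  exact (integrable_const C).mono' hm.aestronglyMeasurable (Filter.Eventually.of_forall hC)

lemma BddMeas.integrable_mu (hS : Setup μ κ φ) {f : M → ℝ} (hf : BddMeas f) :
    Integrable f μ := by
  haveI := hS.prob
  obtain ⟨hm, C, hC⟩ := hf
  exact (integrable_const C).mono' hm.aestronglyMeasurable
    (Filter.Eventually.of_forall fun x => by simpa [Real.norm_eq_abs] using hC x)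

lemma BddMeasC.re {f : M → ℂ} (hf : BddMeasC f) : BddMeas (fun x => (f x).re) := by
  obtain ⟨hm, C, hC⟩ := hf
  exact ⟨Complex.measurable_re.comp hm, C, fun x =>
    le_trans (by simpa using Complex.abs_re_le_norm (f x)) (hC x)⟩

lemma BddMeasC.im {f : M → ℂ} (hf : BddMeasC f) : BddMeas (fun x => (f x).im) := by
  obtain ⟨hm, C, hC⟩ := hf
  exact ⟨Complex.measurable_im.comp hm, C, fun x =>
    le_trans (by simpa using Complex.abs_im_le_norm (f x)) (hC x)⟩

lemma bddMeasC_of_continuous {f : M → ℂ} (hf : Continuous f) : BddMeasC f := by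
  refine ⟨hf.measurable, ?_⟩
  obtain ⟨C, hC⟩ := (isCompact_range hf.norm).bddAbove
  exact ⟨C, fun x => hC ⟨x, rfl⟩⟩

lemma bddMeas_of_continuous {f : M → ℝ} (hf : Continuous f) : BddMeas f := by
  refine ⟨hf.measurable, ?_⟩
  obtain ⟨C, hC⟩ := (isCompact_range hf.abs).bddAbove
  exact ⟨C, fun x => hC ⟨x, rfl⟩⟩


lemma BddMeasC.const_mul {f : M → ℂ} (hf : BddMeasC f) (c : ℂ) :
    BddMeasC (fun x => c * f x) := by
  obtain ⟨hm, C, hC⟩ := hf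
  exact ⟨hm.const_mul c, ‖c‖ * C, fun x => by
    rw [norm_mul]; exact mul_le_mul_of_nonneg_left (hC x) (norm_nonneg c)⟩

lemma BddMeasC.add {f h : M → ℂ} (hf : BddMeasC f) (hh : BddMeasC h) :
    BddMeasC (fun x => f x + h x) := by
  obtain ⟨hm, C, hC⟩ := hf
  obtain ⟨hm', C', hC'⟩ := hh
  exact ⟨hm.add hm', C + C', fun x =>
    (norm_add_le _ _).trans (add_le_add (hC x) (hC' x))⟩

lemma bddMeasC_zero : BddMeasC (fun _ : M => (0 : ℂ)) :=
  ⟨measurable_const, 0, fun x => by simp⟩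

lemma bddMeasC_sum {ι : Type*} (s : Finset ι) (F : ι → M → ℂ)
    (h : ∀ i ∈ s, BddMeasC (F i)) : BddMeasC (fun x => ∑ i ∈ s, F i x) := by
  classical
  induction s using Finset.induction with
  | empty => simpa using bddMeasC_zero
  | @insert a s ha ih =>
      have h1 : BddMeasC (F a) := h a (Finset.mem_insert_self a s)
      have h2 : BddMeasC (fun x => ∑ i ∈ s, F i x) :=
        ih (fun i hi => h i (Finset.mem_insert_of_mem hi))
      have := h1.add h2
      simpa [Finset.sum_insert ha] using this

lemma measurable_PC (hS : Setup μ κ φ) {f : M → ℂ} (hf : Measurable f) :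
    Measurable (PC φ κ f) := by
  haveI := hS.finiteKernel
  have h1 : StronglyMeasurable fun x => ∫ y, f y ∂(κ x) :=
    MeasureTheory.StronglyMeasurable.integral_kernel_prod_right
      (f := fun _ y => f y) (hf.stronglyMeasurable.comp_measurable measurable_snd)
  exact (Complex.measurable_ofReal.comp (Real.measurable_exp.comp hS.contφ.measurable)).mul
    h1.measurable

lemma exists_expBound (hS : Setup μ κ φ) : ∃ B : ℝ, 0 ≤ B ∧ ∀ x, Real.exp (φ x) ≤ B := by
  obtain ⟨B, hB⟩ := (isCompact_range (Real.continuous_exp.comp hS.contφ)).bddAbove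
  exact ⟨max B 0, le_max_right _ _, fun x => le_trans (hB ⟨x, rfl⟩) (le_max_left _ _)⟩

lemma norm_integral_kernel_le (hS : Setup μ κ φ) {f : M → ℂ} {C : ℝ}
    (hC : ∀ y, ‖f y‖ ≤ C) (x : M) :
    ‖∫ y, f y ∂(κ x)‖ ≤ max C 0 := by
  haveI := hS.finiteMeasure x
  have h1 : ‖∫ y, f y ∂(κ x)‖ ≤ (max C 0) * ((κ x) Set.univ).toReal :=
    norm_integral_le_of_norm_le_const
      (Filter.Eventually.of_forall fun y => (hC y).trans (le_max_left _ _))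
  have h2 : ((κ x) Set.univ).toReal ≤ 1 := by
    have := ENNReal.toReal_mono (by simp) (hS.subMarkov x)
    simpa using this
  calc ‖∫ y, f y ∂(κ x)‖ ≤ (max C 0) * ((κ x) Set.univ).toReal := h1
    _ ≤ (max C 0) * 1 := mul_le_mul_of_nonneg_left h2 (le_max_right _ _)
    _ = max C 0 := mul_one _

lemma PC_bdd (hS : Setup μ κ φ) {f : M → ℂ} (hf : BddMeasC f) : BddMeasC (PC φ κ f) := by
  obtain ⟨B, hB0, hB⟩ := exists_expBound hS
  obtain ⟨hm, C, hC⟩ := hf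
  refine ⟨measurable_PC hS hm, B * max C 0, fun x => ?_⟩
  have h1 : ‖PC φ κ f x‖ = Real.exp (φ x) * ‖∫ y, f y ∂(κ x)‖ := by
    simp only [PC, norm_mul, Complex.norm_real, Real.norm_eq_abs,
      abs_of_pos (Real.exp_pos _)]
  rw [h1]
  exact mul_le_mul (hB x) (norm_integral_kernel_le hS hC x) (norm_nonneg _) hB0

lemma PC_ofReal {h : M → ℝ} :
    PC φ κ (fun x => (h x : ℂ)) = fun x => ((PR φ κ h x : ℝ) : ℂ) := by
  funext x
  simp only [PC, PR]
  rw [show (∫ y, ((h y : ℝ) : ℂ) ∂(κ x)) = ((∫ y, h y ∂(κ x) : ℝ) : ℂ) from integral_ofReal,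
    Complex.ofReal_mul]

lemma PC_re_eq (hS : Setup μ κ φ) {f : M → ℂ} (hf : BddMeasC f) (x : M) :
    (PC φ κ f x).re = PR φ κ (fun y => (f y).re) x := by
  have hi := hf.integrable_kernel hS x
  have h1 : ∫ y, (f y).re ∂(κ x) = (∫ y, f y ∂(κ x)).re := by
    simpa using integral_re hi
  simp only [PC, PR, Complex.mul_re, Complex.ofReal_re, Complex.ofReal_im, ← h1]
  ring

lemma PC_im_eq (hS : Setup μ κ φ) {f : M → ℂ} (hf : BddMeasC f) (x : M) :
    (PC φ κ f x).im = PR φ κ (fun y => (f y).im) x := by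
  have hi := hf.integrable_kernel hS x
  have h1 : ∫ y, (f y).im ∂(κ x) = (∫ y, f y ∂(κ x)).im := by
    simpa using integral_im hi
  simp only [PC, PR, Complex.mul_im, Complex.ofReal_re, Complex.ofReal_im, ← h1]
  ring

lemma PC_cont {T : Lp ℂ ⊤ μ →L[ℂ] Lp ℂ ⊤ μ} {lam : ℝ} {g : M → ℝ}
    (hHA : HypHA μ κ φ T lam g) {f : M → ℂ} (hf : BddMeasC f) :
    Continuous (PC φ κ f) := by
  have hre : Continuous (PR φ κ (fun y => (f y).re)) := hHA.strongFeller _ hf.re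
  have him : Continuous (PR φ κ (fun y => (f y).im)) := hHA.strongFeller _ hf.im
  have heq : PC φ κ f = fun x => (PR φ κ (fun y => (f y).re) x : ℂ) +
      (PR φ κ (fun y => (f y).im) x : ℂ) * Complex.I := by
    funext x
    rw [← PC_re_eq hHA.setup hf x, ← PC_im_eq hHA.setup hf x, Complex.re_add_im]
  rw [heq]
  exact (Complex.continuous_ofReal.comp hre).add
    ((Complex.continuous_ofReal.comp him).mul continuous_const)

lemma PC_const_mul (c : ℂ) (f : M → ℂ) :
    PC φ κ (fun x => c * f x) = fun x => c * PC φ κ f x := by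
  funext x
  simp only [PC]
  have : ∫ y, c * f y ∂(κ x) = c * ∫ y, f y ∂(κ x) := by
    simpa [smul_eq_mul] using integral_smul c f (μ := κ x)
  rw [this]; ring

lemma PC_sum (hS : Setup μ κ φ) {ι : Type*} (s : Finset ι) (F : ι → M → ℂ)
    (hF : ∀ i ∈ s, BddMeasC (F i)) :
    PC φ κ (fun x => ∑ i ∈ s, F i x) = fun x => ∑ i ∈ s, PC φ κ (F i) x := by
  funext x
  simp only [PC]
  rw [integral_finset_sum s (fun i hi => (hF i hi).integrable_kernel hS x), Finset.mul_sum]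

lemma PC_iter_bdd (hS : Setup μ κ φ) {f : M → ℂ} (hf : BddMeasC f) (n : ℕ) :
    BddMeasC ((PC φ κ)^[n] f) := by
  induction n with
  | zero => simpa using hf
  | succ n ih => rw [Function.iterate_succ_apply']; exact PC_bdd hS ih

lemma PC_iter_cont {T : Lp ℂ ⊤ μ →L[ℂ] Lp ℂ ⊤ μ} {lam : ℝ} {g : M → ℝ}
    (hHA : HypHA μ κ φ T lam g) {f : M → ℂ} (hf : Continuous f) (n : ℕ) :
    Continuous ((PC φ κ)^[n] f) := by
  induction n with
  | zero => simpa using hf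
  | succ n ih =>
      rw [Function.iterate_succ_apply']
      exact PC_cont hHA (bddMeasC_of_continuous ih)

lemma PC_iter_const_mul (c : ℂ) (f : M → ℂ) (n : ℕ) :
    (PC φ κ)^[n] (fun x => c * f x) = fun x => c * (PC φ κ)^[n] f x := by
  induction n with
  | zero => simp
  | succ n ih =>
      rw [Function.iterate_succ_apply', ih, PC_const_mul]
      funext x
      rw [Function.iterate_succ_apply']

lemma integral_PC {T : Lp ℂ ⊤ μ →L[ℂ] Lp ℂ ⊤ μ} {lam : ℝ} {g : M → ℝ}
    (hHA : HypHA μ κ φ T lam g) {f : M → ℂ} (hf : BddMeasC f) :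
    ∫ x, PC φ κ f x ∂μ = (lam : ℂ) * ∫ x, f x ∂μ := by
  haveI := hHA.setup.prob
  have hPC := PC_bdd hHA.setup hf
  have hfi := hf.integrable_mu hHA.setup
  have hPCi := hPC.integrable_mu hHA.setup
  apply Complex.ext
  · have h1 : ∫ x, (PC φ κ f x).re ∂μ = lam * ∫ x, (f x).re ∂μ := by
      have h0 : ∫ x, (PC φ κ f x).re ∂μ = ∫ x, PR φ κ (fun y => (f y).re) x ∂μ := by
        apply integral_congr_ae
        filter_upwards with x
        exact PC_re_eq hHA.setup hf x
      rw [h0]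
      exact hHA.Pstar _ hf.re
    have h2 : (∫ x, PC φ κ f x ∂μ).re = ∫ x, (PC φ κ f x).re ∂μ := by
      simpa using (integral_re hPCi).symm
    have h3 : (∫ x, f x ∂μ).re = ∫ x, (f x).re ∂μ := by
      simpa using (integral_re hfi).symm
    rw [h2, h1, ← h3]
    simp [Complex.mul_re]
  · have h1 : ∫ x, (PC φ κ f x).im ∂μ = lam * ∫ x, (f x).im ∂μ := by
      have h0 : ∫ x, (PC φ κ f x).im ∂μ = ∫ x, PR φ κ (fun y => (f y).im) x ∂μ := by
        apply integral_congr_ae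
        filter_upwards with x
        exact PC_im_eq hHA.setup hf x
      rw [h0]
      exact hHA.Pstar _ hf.im
    have h2 : (∫ x, PC φ κ f x ∂μ).im = ∫ x, (PC φ κ f x).im ∂μ := by
      simpa using (integral_im hPCi).symm
    have h3 : (∫ x, f x ∂μ).im = ∫ x, (f x).im ∂μ := by
      simpa using (integral_im hfi).symm
    rw [h2, h1, ← h3]
    simp [Complex.mul_im]

lemma integral_PC_iter {T : Lp ℂ ⊤ μ →L[ℂ] Lp ℂ ⊤ μ} {lam : ℝ} {g : M → ℝ}
    (hHA : HypHA μ κ φ T lam g) {f : M → ℂ} (hf : BddMeasC f) (n : ℕ) :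
    ∫ x, (PC φ κ)^[n] f x ∂μ = (lam : ℂ) ^ n * ∫ x, f x ∂μ := by
  induction n with
  | zero => simp
  | succ n ih =>
      rw [Function.iterate_succ_apply', integral_PC hHA (PC_iter_bdd hHA.setup hf n), ih]
      ring

lemma eq_zero_of_ae_zero (hS : Setup μ κ φ) {h : M → ℂ} (hc : Continuous h)
    (h0 : h =ᵐ[μ] 0) : h = 0 := by
  by_contra hne
  have hx : ∃ x, h x ≠ 0 := by
    by_contra h'
    push_neg at h'
    exact hne (funext h')
  obtain ⟨x, hx⟩ := hx
  have hU : IsOpen {y | h y ≠ 0} := isOpen_compl_singleton.preimage hc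
  have hpos := hS.fullSupp _ hU ⟨x, hx⟩
  have hzero : μ {y | h y ≠ 0} = 0 := by
    rw [Filter.EventuallyEq, ae_iff] at h0
    simpa using h0
  rw [hzero] at hpos
  exact lt_irrefl _ hpos

lemma g_integral_pos {T : Lp ℂ ⊤ μ →L[ℂ] Lp ℂ ⊤ μ} {lam : ℝ} {g : M → ℝ}
    (hHA : HypHA μ κ φ T lam g) : 0 < ∫ x, g x ∂μ := by
  haveI := hHA.setup.prob
  rw [hHA.g_int]
  have hU : IsOpen {x | 0 < g x} := isOpen_lt continuous_const hHA.g_cont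
  have hne : {x | 0 < g x}.Nonempty := by
    have hx : ∃ x, g x ≠ 0 := by
      by_contra h''
      push_neg at h''
      exact hHA.g_ne (funext h'')
    obtain ⟨x, hx⟩ := hx
    exact ⟨x, lt_of_le_of_ne (hHA.g_nonneg x) (Ne.symm hx)⟩
  have hpos := hHA.setup.fullSupp _ hU hne
  exact ENNReal.toReal_pos hpos.ne' (measure_ne_top μ _)

lemma not_in_range {T : Lp ℂ ⊤ μ →L[ℂ] Lp ℂ ⊤ μ} {lam : ℝ} {g : M → ℝ}
    (hHA : HypHA μ κ φ T lam g) (k : ℕ) :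
    ¬ ∃ f : M → ℂ, Continuous f ∧ Qop φ κ lam k f = fun x => (g x : ℂ) := by
  rintro ⟨f, hfc, hfeq⟩
  haveI := hHA.setup.prob
  have hf : BddMeasC f := bddMeasC_of_continuous hfc
  have hPk : BddMeasC ((PC φ κ)^[k+1] f) := PC_iter_bdd hHA.setup hf (k+1)
  have hconst : ∫ x, (lam:ℂ)^(k+1) * f x ∂μ = (lam:ℂ)^(k+1) * ∫ x, f x ∂μ := by
    simpa [smul_eq_mul] using integral_smul ((lam:ℂ)^(k+1)) f (μ := μ)
  have hint : ∫ x, Qop φ κ lam k f x ∂μ = 0 := by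
    simp only [Qop]
    rw [integral_sub (hPk.integrable_mu hHA.setup)
      ((hf.integrable_mu hHA.setup).const_mul _), hconst,
      integral_PC_iter hHA hf (k+1), sub_self]
  rw [hfeq] at hint
  have hint2 : ∫ x, ((g x : ℝ) : ℂ) ∂μ = 0 := by simpa using hint
  have h2 : ∫ x, ((g x : ℝ) : ℂ) ∂μ = ((∫ x, g x ∂μ : ℝ) : ℂ) := integral_ofReal
  rw [h2] at hint2
  have hint3 : (∫ x, g x ∂μ : ℝ) = 0 := by exact_mod_cast hint2
  have := g_integral_pos hHA
  rw [hint3] at this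
  exact lt_irrefl _ this

lemma ker_one {T : Lp ℂ ⊤ μ →L[ℂ] Lp ℂ ⊤ μ} {lam : ℝ} {g : M → ℝ}
    (hHA : HypHA μ κ φ T lam g) (k : ℕ) (hk1 : 1 ≤ k) (hk : PerSpecEq μ κ φ lam k)
    {f : M → ℂ} (hf : BddMeasC f)
    (heig : (PC φ κ)^[k+1] f = fun x => (lam : ℂ) ^ (k+1) * f x) :
    ∃ c : ℂ, f =ᵐ[μ] fun x => c * (g x : ℂ) := by
  haveI := hHA.setup.prob
  set n := k + 1 with hn
  have hnpos : 0 < n := Nat.succ_pos k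
  have hn0 : (n : ℂ) ≠ 0 := Nat.cast_ne_zero.mpr (Nat.succ_ne_zero k)
  have hlam0 : (lam : ℂ) ≠ 0 := Complex.ofReal_ne_zero.mpr (ne_of_gt hHA.lam_pos)
  set ζ : ℂ := Complex.exp (2 * (Real.pi : ℂ) * Complex.I / n) with hζdef
  have hζ0 : ζ ≠ 0 := Complex.exp_ne_zero _
  have hζn : ζ ^ n = 1 := by
    rw [hζdef, ← Complex.exp_nat_mul]
    have harg : (n : ℂ) * (2 * (Real.pi : ℂ) * Complex.I / n) = 2 * (Real.pi : ℂ) * Complex.I := by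
      field_simp
    rw [harg]
    exact Complex.exp_two_pi_mul_I
  have h2πI : (2 * (Real.pi : ℂ) * Complex.I) ≠ 0 := by
    refine mul_ne_zero (mul_ne_zero two_ne_zero ?_) Complex.I_ne_zero
    exact Complex.ofReal_ne_zero.mpr Real.pi_ne_zero
  have hζpow : ∀ l : ℕ, 0 < l → l < n → ζ ^ l ≠ 1 := by
    intro l hl hln hone
    rw [hζdef, ← Complex.exp_nat_mul, Complex.exp_eq_one_iff] at hone
    obtain ⟨m, hm⟩ := hone
    have hcast : (l : ℂ) = (m : ℂ) * (n : ℂ) := by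
      apply mul_right_cancel₀ h2πI
      field_simp at hm
      linear_combination (2 * (Real.pi : ℂ) * Complex.I) * hm
    have hZ : (l : ℤ) = m * n := by exact_mod_cast hcast
    have hdvd : (n : ℤ) ∣ (l : ℤ) := ⟨m, by rw [hZ]; ring⟩
    have hle : (n : ℤ) ≤ (l : ℤ) := Int.le_of_dvd (by exact_mod_cast hl) hdvd
    have hlt : (l : ℤ) < (n : ℤ) := by exact_mod_cast hln
    omega
  have hζnorm : ‖ζ‖ = 1 := by
    have h1 : ‖ζ‖ ^ n = 1 := by rw [← norm_pow, hζn, norm_one]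
    by_contra hne
    rcases lt_or_gt_of_ne hne with h | h
    · have := pow_lt_one₀ (norm_nonneg ζ) h (Nat.succ_ne_zero k)
      rw [h1] at this; exact lt_irrefl _ this
    · have := one_lt_pow₀ h (Nat.succ_ne_zero k)
      rw [h1] at this; exact lt_irrefl _ this
  set A : ℕ → M → ℂ := fun l => (PC φ κ)^[l] f with hAdef
  have hA : ∀ l, BddMeasC (A l) := fun l => PC_iter_bdd hHA.setup hf l
  have hAsucc : ∀ l, A (l + 1) = PC φ κ (A l) := fun l => Function.iterate_succ_apply' _ _ _
  have hAn : A n = fun x => (lam : ℂ) ^ n * f x := heig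
  set β : ℕ → ℂ := fun j => ((lam : ℂ) * ζ ^ j)⁻¹ with hβdef
  have hβ0 : ∀ j, β j ≠ 0 := fun j => inv_ne_zero (mul_ne_zero hlam0 (pow_ne_zero _ hζ0))
  have hβinv : ∀ j, (β j)⁻¹ = (lam : ℂ) * ζ ^ j := fun j => inv_inv _
  set F : ℕ → M → ℂ := fun j x => ∑ l ∈ Finset.range n, (β j) ^ l * A l x with hFdef
  have hFbdd : ∀ j, BddMeasC (F j) :=
    fun j => bddMeasC_sum _ _ (fun l _ => (hA l).const_mul _)
  have hβn : ∀ j, (β j) ^ n * (lam : ℂ) ^ n = 1 := by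
    intro j
    have h1 : (ζ ^ j) ^ n = 1 := by rw [← pow_mul, mul_comm, pow_mul, hζn, one_pow]
    calc (β j) ^ n * (lam : ℂ) ^ n = (((lam : ℂ) * ζ ^ j) ^ n)⁻¹ * (lam : ℂ) ^ n := by
          show (((lam : ℂ) * ζ ^ j)⁻¹) ^ n * _ = _
          rw [inv_pow]
      _ = ((lam : ℂ) ^ n * ((ζ ^ j) ^ n))⁻¹ * (lam : ℂ) ^ n := by rw [mul_pow]
      _ = 1 := by rw [h1, mul_one]; exact inv_mul_cancel₀ (pow_ne_zero _ hlam0)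
  have hPCF : ∀ j, PC φ κ (F j) = fun x => ((lam : ℂ) * ζ ^ j) * F j x := by
    intro j
    have h1 : PC φ κ (F j) = fun x => ∑ l ∈ Finset.range n, (β j) ^ l * A (l + 1) x := by
      have hps := PC_sum hHA.setup (Finset.range n) (fun l x => (β j) ^ l * A l x)
        (fun l _ => (hA l).const_mul _)
      rw [hFdef]
      rw [hps]
      funext x
      apply Finset.sum_congr rfl
      intro l _
      rw [show PC φ κ (fun y => (β j) ^ l * A l y) x = (β j) ^ l * PC φ κ (A l) x from
        congrFun (PC_const_mul _ _) x, ← hAsucc l]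
    have hkey : ∀ x, (β j) * (∑ l ∈ Finset.range n, (β j) ^ l * A (l + 1) x) = F j x := by
      intro x
      have h2 : (β j) * (∑ l ∈ Finset.range n, (β j) ^ l * A (l + 1) x)
          = ∑ l ∈ Finset.range n, (β j) ^ (l + 1) * A (l + 1) x := by
        rw [Finset.mul_sum]
        apply Finset.sum_congr rfl
        intro l _
        ring
      have h3 : ∑ l ∈ Finset.range (n + 1), (β j) ^ l * A l x
          = (∑ l ∈ Finset.range n, (β j) ^ (l + 1) * A (l + 1) x) + (β j) ^ 0 * A 0 x :=
        Finset.sum_range_succ' _ n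
      have h4 : ∑ l ∈ Finset.range (n + 1), (β j) ^ l * A l x
          = (∑ l ∈ Finset.range n, (β j) ^ l * A l x) + (β j) ^ n * A n x :=
        Finset.sum_range_succ _ n
      have h5 : (β j) ^ n * A n x = A 0 x := by
        have h6 : A n x = (lam : ℂ) ^ n * f x := congrFun hAn x
        have h7 : A 0 x = f x := rfl
        rw [h6, h7, ← mul_assoc, hβn j, one_mul]
      have h8 := h3
      rw [h4, h5] at h8
      simp only [pow_zero, one_mul] at h8
      have h9 := add_right_cancel h8
      rw [h2]
      exact h9.symm
    funext x
    rw [congrFun h1 x]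
    calc ∑ l ∈ Finset.range n, (β j) ^ l * A (l + 1) x
        = (β j)⁻¹ * ((β j) * ∑ l ∈ Finset.range n, (β j) ^ l * A (l + 1) x) := by
          rw [← mul_assoc, inv_mul_cancel₀ (hβ0 j), one_mul]
      _ = (β j)⁻¹ * F j x := by rw [hkey x]
      _ = ((lam : ℂ) * ζ ^ j) * F j x := by rw [hβinv j]
  have hsum : ∀ x, ∑ j ∈ Finset.range n, F j x = (n : ℂ) * f x := by
    intro x
    have hswap : ∑ j ∈ Finset.range n, F j x
        = ∑ l ∈ Finset.range n, (∑ j ∈ Finset.range n, (β j) ^ l) * A l x := by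
      rw [hFdef]
      rw [Finset.sum_comm]
      apply Finset.sum_congr rfl
      intro l _
      rw [Finset.sum_mul]
    have hgeom : ∀ l ∈ Finset.range n,
        (∑ j ∈ Finset.range n, (β j) ^ l) * A l x
          = (if l = 0 then (n : ℂ) else 0) * A l x := by
      intro l hl
      congr 1
      rcases eq_or_ne l 0 with h0 | h0
      · simp [h0]
      · have hw : ∀ j, (β j) ^ l = ((lam : ℂ)⁻¹) ^ l * ((ζ⁻¹) ^ l) ^ j := by
          intro j
          have hb : β j = (lam : ℂ)⁻¹ * (ζ⁻¹) ^ j := by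
            show ((lam : ℂ) * ζ ^ j)⁻¹ = _
            rw [mul_inv, inv_pow]
          rw [hb, mul_pow, ← pow_mul, mul_comm j l, pow_mul]
        rw [Finset.sum_congr rfl (fun j _ => hw j), ← Finset.mul_sum]
        have hw1 : (ζ⁻¹) ^ l ≠ 1 := by
          intro hcon
          rw [inv_pow] at hcon
          exact hζpow l (Nat.pos_of_ne_zero h0) (Finset.mem_range.mp hl) (inv_eq_one.mp hcon)
        have hwn : ((ζ⁻¹) ^ l) ^ n = 1 := by
          have hin : (ζ⁻¹) ^ n = 1 := by rw [inv_pow, hζn, inv_one]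
          rw [← pow_mul, mul_comm, pow_mul, hin, one_pow]
        rw [geom_sum_eq hw1 n, hwn]
        simp [h0]
    rw [hswap, Finset.sum_congr rfl hgeom]
    have hsingle : ∑ l ∈ Finset.range n, (if l = 0 then (n : ℂ) else 0) * A l x
        = (n : ℂ) * A 0 x := by
      rw [Finset.sum_eq_single 0]
      · simp
      · intro b _ hb; simp [hb]
      · intro h; exact absurd (Finset.mem_range.mpr hnpos) h
    rw [hsingle]
    rfl
  have hFj0 : ∀ j, 0 < j → j < n → F j =ᵐ[μ] 0 := by
    intro j hj0 hjn
    by_contra hne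
    have hper : PerSpec μ κ φ lam ((lam : ℂ) * ζ ^ j) := by
      constructor
      · rw [norm_mul, Complex.norm_real, Real.norm_eq_abs, abs_of_pos hHA.lam_pos,
          norm_pow, hζnorm, one_pow, mul_one]
      · exact ⟨F j, hFbdd j, hne, by rw [hPCF j]⟩
    obtain ⟨j', hj'k, heq'⟩ := (hk _).mp hper
    have hζj : ζ ^ j = rootU k j' := mul_left_cancel₀ hlam0 heq'
    have hk0 : (k : ℂ) ≠ 0 := Nat.cast_ne_zero.mpr (by omega)
    have hroot : (rootU k j') ^ k = 1 := by
      rw [rootU, ← Complex.exp_nat_mul]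
      have harg2 : (k : ℂ) * (2 * (Real.pi : ℂ) * Complex.I * (j' : ℂ) / (k : ℂ))
          = (j' : ℂ) * (2 * (Real.pi : ℂ) * Complex.I) := by
        field_simp
      rw [harg2]
      exact Complex.exp_nat_mul_two_pi_mul_I j'
    have h1 : (ζ ^ j) ^ k = 1 := by rw [hζj]; exact hroot
    have h2 : (ζ ^ j) ^ n = 1 := by rw [← pow_mul, mul_comm, pow_mul, hζn, one_pow]
    have h3 : ζ ^ j = 1 := by
      have h4 : (ζ ^ j) ^ n = (ζ ^ j) ^ k * (ζ ^ j) := pow_succ _ _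
      rw [h2, h1, one_mul] at h4
      exact h4.symm
    exact hζpow j hj0 hjn h3
  have haeF : ∀ᵐ x ∂μ, ∀ j ∈ Finset.range n, j ≠ 0 → F j x = 0 := by
    rw [Filter.eventually_all_finset]
    intro j hj
    rcases eq_or_ne j 0 with h | h
    · filter_upwards with x hx
      exact absurd h hx
    · filter_upwards [hFj0 j (Nat.pos_of_ne_zero h) (Finset.mem_range.mp hj)] with x hx
      intro _
      exact hx
  have hmain : f =ᵐ[μ] fun x => (n : ℂ)⁻¹ * F 0 x := by
    filter_upwards [haeF] with x hx
    have hsx := hsum x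
    have hsingle2 : ∑ j ∈ Finset.range n, F j x = F 0 x := by
      rw [Finset.sum_eq_single 0]
      · intro b hb hb0; exact hx b hb hb0
      · intro h; exact absurd (Finset.mem_range.mpr hnpos) h
    rw [hsingle2] at hsx
    rw [hsx, ← mul_assoc, inv_mul_cancel₀ hn0, one_mul]
  have hPCF0 : PC φ κ (F 0) = fun x => (lam : ℂ) * F 0 x := by
    have h := hPCF 0
    simpa using h
  have hre : PR φ κ (fun y => (F 0 y).re) = fun x => lam * (F 0 x).re := by
    funext x
    rw [← PC_re_eq hHA.setup (hFbdd 0) x, hPCF0]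
    simp [Complex.mul_re]
  have him : PR φ κ (fun y => (F 0 y).im) = fun x => lam * (F 0 x).im := by
    funext x
    rw [← PC_im_eq hHA.setup (hFbdd 0) x, hPCF0]
    simp [Complex.mul_im]
  obtain ⟨cr, hcr⟩ := hHA.eigen_dim _ (hFbdd 0).re (by rw [hre])
  obtain ⟨ci, hci⟩ := hHA.eigen_dim _ (hFbdd 0).im (by rw [him])
  refine ⟨(n : ℂ)⁻¹ * ((cr : ℂ) + (ci : ℂ) * Complex.I), ?_⟩
  filter_upwards [hmain, hcr, hci] with x h1 h2 h3
  rw [h1]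
  have hF0x : F 0 x = ((cr * g x : ℝ) : ℂ) + ((ci * g x : ℝ) : ℂ) * Complex.I := by
    rw [← Complex.re_add_im (F 0 x), h2, h3]
  rw [hF0x]
  push_cast
  ring

end Statement16Aux

/-- **Step 3 of Lemma A.3.** Under Hypothesis (HA) with
`σ_per(P) = {lam e^{2πi j/k}}_{j<k}`: `g` is not in the range of `P^{k+1} - lam^{k+1}` on
`C(M;ℂ)`, and for every `m ≥ 1` the kernel of `(P^{k+1} - lam^{k+1})^m` in `C(M;ℂ)` equals
`span_ℂ{g}`; i.e. the eigenvalue `lam^{k+1}` of `P^{k+1}` is semisimple with one-dimensional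
generalized eigenspace. -/
theorem statement16 (μ : Measure M) (κ : Kernel M M) (φ : M → ℝ)
    (T : Lp ℂ ⊤ μ →L[ℂ] Lp ℂ ⊤ μ) (lam : ℝ) (g : M → ℝ)
    (hHA : HypHA μ κ φ T lam g)
    (k : ℕ) (hk1 : 1 ≤ k) (hk : PerSpecEq μ κ φ lam k) :
    (¬ ∃ f : M → ℂ, Continuous f ∧ Qop φ κ lam k f = fun x => (g x : ℂ)) ∧
    (∀ m : ℕ, 1 ≤ m → ∀ f : M → ℂ, Continuous f →
      ((Qop φ κ lam k)^[m] f = 0 ↔ ∃ c : ℂ, f = fun x => c * (g x : ℂ))) := by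
  have hS := hHA.setup
  have hQcont : ∀ f : M → ℂ, Continuous f → Continuous (Qop φ κ lam k f) := by
    intro f hf
    exact (PC_iter_cont hHA hf (k + 1)).sub (continuous_const.mul hf)
  have hQitercont : ∀ N : ℕ, ∀ f : M → ℂ, Continuous f →
      Continuous ((Qop φ κ lam k)^[N] f) := by
    intro N
    induction N with
    | zero => intro f hf; simpa using hf
    | succ N ihN =>
        intro f hf
        rw [Function.iterate_succ_apply]
        exact ihN _ (hQcont f hf)
  have hQsmul : ∀ (c : ℂ) (f : M → ℂ), Qop φ κ lam k (fun x => c * f x)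
      = fun x => c * Qop φ κ lam k f x := by
    intro c f
    funext x
    simp only [Qop]
    rw [congrFun (PC_iter_const_mul c f (k + 1)) x]
    ring
  have hPC0 : ∀ N : ℕ, (PC φ κ)^[N] (0 : M → ℂ) = 0 := by
    intro N
    induction N with
    | zero => rfl
    | succ N ih =>
        rw [Function.iterate_succ_apply', ih]
        funext x
        simp [PC]
  have hQzero : Qop φ κ lam k (0 : M → ℂ) = 0 := by
    funext x
    simp [Qop, hPC0 (k + 1)]
  have hPCg : ∀ N : ℕ, (PC φ κ)^[N] (fun x => ((g x : ℝ) : ℂ))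
      = fun x => ((lam : ℂ)) ^ N * ((g x : ℝ) : ℂ) := by
    intro N
    induction N with
    | zero => funext x; simp
    | succ N ih =>
        rw [Function.iterate_succ_apply', ih]
        have h1 : (fun x => ((lam : ℂ)) ^ N * ((g x : ℝ) : ℂ))
            = fun x => ((lam : ℂ)) ^ N * ((fun y => ((g y : ℝ) : ℂ)) x) := rfl
        rw [h1, PC_const_mul, PC_ofReal]
        funext x
        rw [hHA.g_eigen]
        push_cast
        ring
  have hQg : ∀ c : ℂ, Qop φ κ lam k (fun x => c * (g x : ℂ)) = 0 := by
    intro c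
    funext x
    simp only [Qop, Pi.zero_apply]
    have h1 := congrFun (PC_iter_const_mul (φ := φ) (κ := κ) c (fun y => ((g y : ℝ) : ℂ)) (k + 1)) x
    rw [show (fun x => c * (g x : ℂ)) = (fun x => c * ((fun y => ((g y : ℝ) : ℂ)) x)) from rfl,
      h1, congrFun (hPCg (k + 1)) x]
    ring
  have hQiterg : ∀ m : ℕ, 1 ≤ m → ∀ c : ℂ,
      (Qop φ κ lam k)^[m] (fun x => c * (g x : ℂ)) = 0 := by
    intro m hm c
    obtain ⟨m', rfl⟩ : ∃ m', m = m' + 1 := ⟨m - 1, by omega⟩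
    rw [Function.iterate_succ_apply, hQg c]
    induction m' with
    | zero => rfl
    | succ m' ih =>
        rw [Function.iterate_succ_apply, hQzero]
        exact ih (by omega)
  have hexact : ∀ f : M → ℂ, Continuous f → ∀ c : ℂ, (f =ᵐ[μ] fun x => c * (g x : ℂ)) →
      f = fun x => c * (g x : ℂ) := by
    intro f hfc c hae
    have hdiff : (fun x => f x - c * (g x : ℂ)) = 0 := by
      apply eq_zero_of_ae_zero hS
      · exact hfc.sub (continuous_const.mul (Complex.continuous_ofReal.comp hHA.g_cont))
      · filter_upwards [hae] with x hx
        simp [hx]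
    funext x
    exact sub_eq_zero.mp (congrFun hdiff x)
  have hker1 : ∀ f : M → ℂ, Continuous f → Qop φ κ lam k f = 0 →
      ∃ c : ℂ, f = fun x => c * (g x : ℂ) := by
    intro f hfc hQ
    have heig : (PC φ κ)^[k + 1] f = fun x => (lam : ℂ) ^ (k + 1) * f x := by
      funext x
      have h1 := congrFun hQ x
      simp only [Qop, Pi.zero_apply] at h1
      exact sub_eq_zero.mp h1
    obtain ⟨c, hc⟩ := ker_one hHA k hk1 hk (bddMeasC_of_continuous hfc) heig
    exact ⟨c, hexact f hfc c hc⟩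
  have hkerm : ∀ m : ℕ, ∀ f : M → ℂ, Continuous f → (Qop φ κ lam k)^[m + 1] f = 0 →
      ∃ c : ℂ, f = fun x => c * (g x : ℂ) := by
    intro m
    induction m with
    | zero =>
        intro f hfc h
        exact hker1 f hfc (by simpa using h)
    | succ m ih =>
        intro f hfc h
        have h2 : Qop φ κ lam k ((Qop φ κ lam k)^[m + 1] f) = 0 := by
          rw [Function.iterate_succ_apply'] at h
          exact h
        have hcont1 : Continuous ((Qop φ κ lam k)^[m + 1] f) := hQitercont (m + 1) f hfc
        obtain ⟨c, hc⟩ := hker1 _ hcont1 h2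
        rcases eq_or_ne c 0 with rfl | hc0
        · have h3 : (Qop φ κ lam k)^[m + 1] f = 0 := by
            rw [hc]
            funext x
            simp
          exact ih f hfc h3
        · exfalso
          apply not_in_range hHA k
          have h4 : Qop φ κ lam k ((Qop φ κ lam k)^[m] f) = fun x => c * (g x : ℂ) := by
            rw [Function.iterate_succ_apply'] at hc
            exact hc
          refine ⟨fun x => c⁻¹ * (Qop φ κ lam k)^[m] f x,
            continuous_const.mul (hQitercont m f hfc), ?_⟩
          funext x
          rw [congrFun (hQsmul c⁻¹ _) x, congrFun h4 x, ← mul_assoc,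
            inv_mul_cancel₀ hc0, one_mul]
  refine ⟨not_in_range hHA k, ?_⟩
  intro m hm f hfc
  constructor
  · intro h
    obtain ⟨m', rfl⟩ : ∃ m', m = m' + 1 := ⟨m - 1, by omega⟩
    exact hkerm m' f hfc h
  · rintro ⟨c, rfl⟩
    exact hQiterg m hm c

end

end QEM
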